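/- For every pair (f₁,f₂) ∈ ℂ[x,y]² satisfying x·∂_x f₂ − ∂_y f₁ = 0, there exists a unique constant c ∈ ℂ such that the pair (f₁ − c, f₂) lies in the image of the map f ↦ (x·∂_x f, ∂_y f); hence the first logarithmic De Rham cohomology space H¹_DS of ℂ[x,y] along the ideal (x) is isomorphic to ℂ. -/

import Mathlib

open MvPolynomial

/-- `ℂ[x,y]`, with `X 0 = x`, `X 1 = y`. -/
abbrev A : Type := MvPolynomial (Fin 2) ℂ

lemma coeff_pderiv (i : Fin 2) (f : A) (m : Fin 2 →₀ ℕ) :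
    coeff m (pderiv i f) = ((m i : ℂ) + 1) * coeff (m + Finsupp.single i 1) f := by
  induction f using MvPolynomial.induction_on' with
  | monomial s a =>
    rw [pderiv_monomial, coeff_monomial, coeff_monomial]
    by_cases hs : s i = 0
    · have h1 : s ≠ m + Finsupp.single i 1 := by
        intro hEq
        apply absurd hs
        simp [hEq, Finsupp.add_apply, Finsupp.single_apply]
      rw [if_neg h1, mul_zero]
      split_ifs with h2
      · simp [hs]
      · simp
    · have key : s - Finsupp.single i 1 = m ↔ s = m + Finsupp.single i 1 := by
        constructor
        · intro hEq
          rw [← hEq, tsub_add_cancel_of_le]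
          exact Finsupp.single_le_iff.mpr (Nat.one_le_iff_ne_zero.mpr hs)
        · intro hEq
          rw [hEq, add_tsub_cancel_right]
      split_ifs with h1 h2 h2
      · have : s i = m i + 1 := by
          rw [key] at h1
          simp [h1, Finsupp.add_apply, Finsupp.single_apply]
        rw [this]
        push_cast
        ring
      · exact absurd (key.mp h1) h2
      · exact absurd (key.mpr h2) h1
      · rw [mul_zero]
  | add p q hp hq =>
    rw [map_add, coeff_add, coeff_add, hp, hq, mul_add]

noncomputable def gAux (f₁ f₂ : A) : A :=
  AddMonoidAlgebra.ofCoeff <| Finsupp.onFinset (f₁.support ∪ f₂.support.image (· + Finsupp.single 1 1))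
    (fun m => if m 1 = 0 then (if m 0 = 0 then 0 else coeff m f₁ / (m 0 : ℂ))
              else coeff (m - Finsupp.single 1 1) f₂ / (m 1 : ℂ))
    (by
      intro m hm
      simp only [Finset.mem_union, Finset.mem_image]
      split_ifs at hm with h1 h2
      · exact absurd rfl hm
      · left
        rw [mem_support_iff]
        intro hc
        exact hm (by rw [hc, zero_div])
      · right
        refine ⟨m - Finsupp.single 1 1, ?_, ?_⟩
        · rw [mem_support_iff]
          intro hc
          exact hm (by rw [hc, zero_div])
        · exact tsub_add_cancel_of_le (Finsupp.single_le_iff.mpr (Nat.one_le_iff_ne_zero.mpr h1)))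

lemma coeff_gAux (f₁ f₂ : A) (m : Fin 2 →₀ ℕ) :
    coeff m (gAux f₁ f₂) =
      if m 1 = 0 then (if m 0 = 0 then 0 else coeff m f₁ / (m 0 : ℂ))
      else coeff (m - Finsupp.single 1 1) f₂ / (m 1 : ℂ) := rfl

lemma zero_ne_one_fin2 : (0 : Fin 2) ≠ 1 := by decide

lemma fin2_eq_zero (n : Fin 2 →₀ ℕ) (h0 : n 0 = 0) (h1 : n 1 = 0) : n = 0 := by
  ext j
  fin_cases j
  · exact h0
  · exact h1

lemma cast_pred (k : ℕ) (hk : k ≠ 0) : ((k - 1 : ℕ) : ℂ) + 1 = (k : ℂ) := by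
  exact_mod_cast congrArg (fun m : ℕ => (m : ℂ)) (Nat.succ_pred_eq_of_pos (Nat.pos_of_ne_zero hk))

/-- For every cocycle `(f₁,f₂)` of the logarithmic De Rham complex of `ℂ[x,y]` along `(x)`
(i.e. `x·∂_x f₂ − ∂_y f₁ = 0`), there is a unique constant `c ∈ ℂ` such that
`(f₁ − c, f₂)` lies in the image of `d⁰ : f ↦ (x·∂_x f, ∂_y f)`; hence `H¹_DS ≅ ℂ`. -/
theorem H1_DS_eq_C (f₁ f₂ : A) (h : X 0 * pderiv 0 f₂ - pderiv 1 f₁ = 0) :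
    ∃! c : ℂ, ∃ g : A, (f₁ - C c, f₂) = (X 0 * pderiv 0 g, pderiv 1 g) := by
  have hco : ∀ n : Fin 2 →₀ ℕ,
      coeff n (X 0 * pderiv 0 f₂) = ((n 1 : ℂ) + 1) * coeff (n + Finsupp.single 1 1) f₁ := by
    intro n
    have := sub_eq_zero.mp (by rw [← coeff_sub, h, coeff_zero] :
      coeff n (X 0 * pderiv 0 f₂) - coeff n (pderiv 1 f₁) = 0)
    rw [this, coeff_pderiv]
  have key1 : ∀ n : Fin 2 →₀ ℕ, n 0 = 0 →
      ((n 1 : ℂ) + 1) * coeff (n + Finsupp.single 1 1) f₁ = 0 := by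
    intro n hn0
    rw [← hco n, coeff_X_mul']
    rw [if_neg]
    simp [Finsupp.mem_support_iff, hn0]
  have key2 : ∀ n : Fin 2 →₀ ℕ, n 0 ≠ 0 →
      (n 0 : ℂ) * coeff n f₂ = ((n 1 : ℂ) + 1) * coeff (n + Finsupp.single 1 1) f₁ := by
    intro n hn0
    rw [← hco n, coeff_X_mul', if_pos (Finsupp.mem_support_iff.mpr hn0), coeff_pderiv,
      tsub_add_cancel_of_le (Finsupp.single_le_iff.mpr (Nat.one_le_iff_ne_zero.mpr hn0))]
    congr 1
    rw [Finsupp.tsub_apply, Finsupp.single_apply, if_pos rfl]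
    exact (cast_pred _ hn0).symm
  refine ⟨coeff 0 f₁, ⟨gAux f₁ f₂, ?_⟩, ?_⟩
  · refine Prod.ext ?_ ?_
    · -- f₁ - C c = X 0 * pderiv 0 (gAux f₁ f₂)
      show f₁ - C (coeff 0 f₁) = X 0 * pderiv 0 (gAux f₁ f₂)
      ext n
      rw [coeff_sub, coeff_C, coeff_X_mul']
      by_cases hn0 : n 0 = 0
      · rw [if_neg (show ¬ (0 : Fin 2) ∈ n.support from by
          simp [Finsupp.mem_support_iff, hn0])]
        by_cases hn : (0 : Fin 2 →₀ ℕ) = n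
        · rw [if_pos hn, ← hn, sub_self]
        · rw [if_neg hn, sub_zero]
          have hn1 : n 1 ≠ 0 := fun h1 => hn (fin2_eq_zero n hn0 h1).symm
          have hle : Finsupp.single (1 : Fin 2) 1 ≤ n :=
            Finsupp.single_le_iff.mpr (Nat.one_le_iff_ne_zero.mpr hn1)
          have hk := key1 (n - Finsupp.single 1 1)
            (by rw [Finsupp.tsub_apply, Finsupp.single_apply, if_neg zero_ne_one_fin2.symm]; simpa)
          rw [tsub_add_cancel_of_le hle] at hk
          have hcast : (((n - Finsupp.single 1 1 : Fin 2 →₀ ℕ) 1 : ℕ) : ℂ) + 1 ≠ 0 :=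
            Nat.cast_add_one_ne_zero _
          exact (mul_eq_zero.mp hk).resolve_left hcast
      · rw [if_pos (Finsupp.mem_support_iff.mpr hn0),
          if_neg (show ¬ (0 : Fin 2 →₀ ℕ) = n from fun hn => hn0 (by rw [← hn]; rfl)),
          sub_zero, coeff_pderiv,
          tsub_add_cancel_of_le (Finsupp.single_le_iff.mpr (Nat.one_le_iff_ne_zero.mpr hn0)),
          coeff_gAux]
        have hsub0 : (((n - Finsupp.single 0 1 : Fin 2 →₀ ℕ) 0 : ℕ) : ℂ) + 1 = (n 0 : ℂ) := by
          rw [Finsupp.tsub_apply, Finsupp.single_apply, if_pos rfl]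
          exact cast_pred _ hn0
        rw [hsub0]
        have hn0c : (n 0 : ℂ) ≠ 0 := Nat.cast_ne_zero.mpr hn0
        by_cases hn1 : n 1 = 0
        · rw [if_pos hn1, if_neg hn0, mul_div_cancel₀ _ hn0c]
        · rw [if_neg hn1]
          have hle : Finsupp.single (1 : Fin 2) 1 ≤ n :=
            Finsupp.single_le_iff.mpr (Nat.one_le_iff_ne_zero.mpr hn1)
          have hk := key2 (n - Finsupp.single 1 1)
            (by rw [Finsupp.tsub_apply, Finsupp.single_apply, if_neg zero_ne_one_fin2.symm]; simpa)
          rw [tsub_add_cancel_of_le hle] at hk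
          have e0 : (((n - Finsupp.single 1 1 : Fin 2 →₀ ℕ) 0 : ℕ) : ℂ) = (n 0 : ℂ) := by
            rw [Finsupp.tsub_apply, Finsupp.single_apply, if_neg zero_ne_one_fin2.symm]; simp
          have e1 : (((n - Finsupp.single 1 1 : Fin 2 →₀ ℕ) 1 : ℕ) : ℂ) + 1 = (n 1 : ℂ) := by
            rw [Finsupp.tsub_apply, Finsupp.single_apply, if_pos rfl]
            exact cast_pred _ hn1
          rw [e0, e1] at hk
          have hn1c : (n 1 : ℂ) ≠ 0 := Nat.cast_ne_zero.mpr hn1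
          field_simp
          linear_combination -hk
    · -- f₂ = pderiv 1 (gAux f₁ f₂)
      show f₂ = pderiv 1 (gAux f₁ f₂)
      ext n
      rw [coeff_pderiv, coeff_gAux]
      have h1 : ((n + Finsupp.single 1 1 : Fin 2 →₀ ℕ) 1 : ℕ) = n 1 + 1 := by
        rw [Finsupp.add_apply, Finsupp.single_apply, if_pos rfl]
      rw [if_neg (by omega), add_tsub_cancel_right, h1]
      have hne : ((n 1 : ℂ) + 1) ≠ 0 := Nat.cast_add_one_ne_zero _
      push_cast
      rw [mul_div_cancel₀ _ hne]
  · rintro c' ⟨g', hg'⟩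
    have h1 : f₁ - C c' = X 0 * pderiv 0 g' := congrArg Prod.fst hg'
    have h2 := congrArg constantCoeff h1
    rw [map_sub, constantCoeff_C, map_mul, constantCoeff_X, zero_mul] at h2
    rw [constantCoeff_eq] at h2
    exact (sub_eq_zero.mp h2).symm
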